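/- There exists a constant C = C(k) such that the following holds. Let p > k be prime, let V be a finite-dimensional F_p-vector space, let Q : V → F_p be a polynomial of degree k with bias L_Q ≥ c, and let ε > 0. Then there exist a natural number m ≤ (εc/2)^{−C}, complex coefficients c_1, …, c_m with Σ_{i∈[m]} |c_i| ≤ c^{−1}, and polynomials R_1, …, R_m : V → F_p of degree at most k−1 such that ‖χ ∘ Q − Σ_{i∈[m]} c_i · (χ ∘ R_i)‖_{L²} ≤ ε. -/

import Mathlib

open scoped BigOperators

/-- The standard additive character of `ZMod p`. -/
noncomputable def chi (p : ℕ) (a : ZMod p) : ℂ :=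
  Complex.exp (2 * Real.pi * Complex.I * (a.val : ℂ) / (p : ℂ))

/-- Expectation (uniform average) of a complex-valued function on a finite type. -/
noncomputable def expAvg {X : Type*} [Fintype X] (F : X → ℂ) : ℂ :=
  (∑ x : X, F x) / (Fintype.card X : ℂ)

/-- The bias of a map into `ZMod p` (a real number: for multilinear forms the
average of the character is a nonnegative real). -/
noncomputable def biasF {p : ℕ} {X : Type*} [Fintype X] (α : X → ZMod p) : ℝ :=
  (expAvg fun x => chi p (α x)).re

/-- The (normalized) `L²` norm of a complex-valued function on a finite type. -/
noncomputable def L2norm {X : Type*} [Fintype X] (F : X → ℂ) : ℝ :=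
  Real.sqrt ((∑ x : X, ‖F x‖ ^ 2) / (Fintype.card X : ℝ))

/-- `Q : V → ZMod p` is a polynomial of degree at most `k`: in the coordinates given by
some (equivalently, any) basis it is given by a polynomial of (total) degree at most `k`. -/
def IsPolyDegLE (p : ℕ) {V : Type*} [AddCommGroup V] [Module (ZMod p) V]
    (k : ℕ) (Q : V → ZMod p) : Prop :=
  ∃ (n : ℕ) (e : V ≃ₗ[ZMod p] (Fin n → ZMod p)) (P : MvPolynomial (Fin n) (ZMod p)),
    P.totalDegree ≤ k ∧ ∀ v : V, Q v = MvPolynomial.eval (e v) P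

/-- The iterated discrete derivative `Δ_{a 1} ⋯ Δ_{a k} Q (x)`, where
`Δ_a Q (x) = Q (x + a) - Q (x)`. -/
noncomputable def discDeriv {p : ℕ} {V : Type*} [AddCommGroup V] (k : ℕ)
    (Q : V → ZMod p) (a : Fin k → V) (x : V) : ZMod p :=
  ∑ S : Finset (Fin k), (-1 : ZMod p) ^ (k - S.card) * Q (x + ∑ i ∈ S, a i)

/-- The symmetric multilinear form associated to a polynomial `Q` of degree `k` (for `p > k`):
`L_Q (a_1, …, a_k) = (k!)⁻¹ Δ_{a_1} ⋯ Δ_{a_k} Q (x)`, which is independent of `x`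
(we take `x = 0`). -/
noncomputable def LQ {p : ℕ} {V : Type*} [AddCommGroup V] (k : ℕ)
    (Q : V → ZMod p) (a : Fin k → V) : ZMod p :=
  (Nat.factorial k : ZMod p)⁻¹ * discDeriv k Q a 0



set_option maxHeartbeats 1000000

section ChiLemmas
variable {p : ℕ} [Fact p.Prime]

lemma chi_eq (a : ZMod p) : chi p a = Complex.exp (((2 * Real.pi * (a.val : ℝ) / (p : ℝ) : ℝ) : ℂ) * Complex.I) := by
  unfold chi
  congr 1
  push_cast
  ring

lemma abs_chi (a : ZMod p) : ‖chi p a‖ = 1 := by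
  rw [chi_eq, Complex.norm_exp_ofReal_mul_I]

lemma chi_zero : chi p (0 : ZMod p) = 1 := by
  unfold chi
  simp [ZMod.val_zero]

lemma chi_add (a b : ZMod p) : chi p (a + b) = chi p a * chi p b := by
  have hp : (p : ℂ) ≠ 0 := by
    exact_mod_cast (Fact.out : p.Prime).ne_zero
  unfold chi
  rw [← Complex.exp_add]
  have hval : ((a + b).val : ℂ) = ((a.val + b.val : ℕ) : ℂ) - (p : ℂ) * (((a.val + b.val) / p : ℕ) : ℂ) := by
    have h := Nat.div_add_mod (a.val + b.val) p
    have : (a + b).val = (a.val + b.val) % p := by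
      rw [ZMod.val_add]
    rw [this]
    have := congrArg (fun n : ℕ => (n : ℂ)) h
    push_cast at this ⊢
    linear_combination this
  rw [hval]
  have : 2 * ↑Real.pi * Complex.I * (((a.val + b.val : ℕ) : ℂ) - (p : ℂ) * (((a.val + b.val) / p : ℕ) : ℂ)) / (p : ℂ)
      = (2 * ↑Real.pi * Complex.I * (a.val : ℂ) / (p : ℂ) + 2 * ↑Real.pi * Complex.I * (b.val : ℂ) / (p : ℂ))
        - (((a.val + b.val) / p : ℕ) : ℂ) * (2 * ↑Real.pi * Complex.I) := by
    field_simp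
    push_cast; ring
  rw [this, Complex.exp_sub, Complex.exp_nat_mul_two_pi_mul_I]
  simp

lemma conj_chi (a : ZMod p) : (starRingEnd ℂ) (chi p a) = chi p (-a) := by
  have h1 : chi p a * chi p (-a) = 1 := by
    rw [← chi_add]; simp [chi_zero]
  have h2 : chi p a * (starRingEnd ℂ) (chi p a) = 1 := by
    rw [Complex.mul_conj]
    norm_cast
    rw [← Complex.sq_norm, abs_chi]
    norm_num
  have hne : chi p a ≠ 0 := by
    intro h; rw [h] at h2; simp at h2
  field_simp at h1 h2
  rw [← h1] at h2
  exact mul_left_cancel₀ hne h2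

end ChiLemmas

section AuxComb

lemma card_pow_eq_sum (k : ℕ) (S : Finset (Fin k)) :
    ((S.card : ℤ)) ^ k = ∑ g : Fin k → Fin k, if ∀ i, g i ∈ S then (1 : ℤ) else 0 := by
  classical
  have h1 : (Finset.univ.filter (fun g : Fin k → Fin k => ∀ i, g i ∈ S)) = Fintype.piFinset (fun _ => S) := by
    ext g
    simp [Fintype.mem_piFinset]
  have h2 : (Fintype.piFinset (fun _ : Fin k => S)).card = S.card ^ k := by
    rw [Fintype.card_piFinset]
    simp
  rw [Finset.sum_boole, h1, h2]
  push_cast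
  ring

lemma innerAltSum (k : ℕ) (A : Finset (Fin k)) :
    (∑ S : Finset (Fin k), if A ⊆ S then (-1 : ℤ) ^ (k - S.card) else 0)
      = if A = Finset.univ then 1 else 0 := by
  classical
  have hcard : ∀ S : Finset (Fin k), S.card ≤ k := by
    intro S
    have h := Finset.card_le_univ S
    simpa using h
  have hcompl : ∀ S : Finset (Fin k), (k - Sᶜ.card) = S.card := by
    intro S
    rw [Finset.card_compl, Fintype.card_fin]
    exact Nat.sub_sub_self (hcard S)
  calc (∑ S : Finset (Fin k), if A ⊆ S then (-1 : ℤ) ^ (k - S.card) else 0)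
      = ∑ S : Finset (Fin k), if A ⊆ Sᶜ then (-1 : ℤ) ^ (k - Sᶜ.card) else 0 := by
        apply Fintype.sum_equiv (Function.Involutive.toPerm _ compl_compl)
        intro S
        simp [Function.Involutive.toPerm]
    _ = ∑ S : Finset (Fin k), if S ∈ Aᶜ.powerset then (-1 : ℤ) ^ S.card else 0 := by
        apply Finset.sum_congr rfl
        intro S _
        rw [hcompl S]
        exact if_congr (by simp [Finset.mem_powerset, Finset.subset_compl_comm]) rfl rfl
    _ = ∑ S ∈ Aᶜ.powerset, (-1 : ℤ) ^ S.card := by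
        rw [Finset.sum_ite_mem, Finset.univ_inter]
    _ = if Aᶜ = ∅ then 1 else 0 := Finset.sum_powerset_neg_one_pow_card
    _ = if A = Finset.univ then 1 else 0 := by
        congr 1
        simp [Finset.compl_eq_empty_iff]

lemma card_surj (k : ℕ) :
    (∑ g : Fin k → Fin k, if Finset.univ.image g = Finset.univ then (1 : ℤ) else 0)
      = (Nat.factorial k : ℤ) := by
  classical
  have hiff : ∀ g : Fin k → Fin k, (Finset.univ.image g = Finset.univ ↔ Function.Surjective g) := by
    intro g
    constructor
    · intro h y
      have : y ∈ Finset.univ.image g := by rw [h]; simp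
      simpa using this
    · intro h
      apply Finset.eq_univ_of_forall
      intro y
      obtain ⟨x, hx⟩ := h y
      simp only [Finset.mem_image]
      exact ⟨x, Finset.mem_univ x, hx⟩
  have hfil : (Finset.univ.filter (fun g : Fin k → Fin k => Finset.univ.image g = Finset.univ))
      = (Finset.univ.filter (fun g : Fin k → Fin k => Function.Surjective g)) := by
    apply Finset.filter_congr
    intro g _
    simp only [hiff g]
  have e : {g : Fin k → Fin k // Function.Surjective g} ≃ Equiv.Perm (Fin k) :=
    { toFun := fun g => Equiv.ofBijective g.1 ⟨(Finite.injective_iff_surjective).2 g.2, g.2⟩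
      invFun := fun e => ⟨e, e.surjective⟩
      left_inv := fun g => Subtype.ext rfl
      right_inv := fun e => Equiv.ext fun x => rfl }
  have h2 : (Finset.univ.filter (fun g : Fin k → Fin k => Function.Surjective g)).card
      = Fintype.card {g : Fin k → Fin k // Function.Surjective g} := (Fintype.card_subtype _).symm
  rw [Finset.sum_boole, hfil, h2, Fintype.card_congr e, Fintype.card_perm]
  simp

lemma alt_sum_eq_factorial (k : ℕ) :
    ∑ S : Finset (Fin k), (-1 : ℤ) ^ (k - S.card) * (S.card : ℤ) ^ k = (Nat.factorial k : ℤ) := by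
  classical
  calc ∑ S : Finset (Fin k), (-1 : ℤ) ^ (k - S.card) * (S.card : ℤ) ^ k
      = ∑ S : Finset (Fin k), ∑ g : Fin k → Fin k,
          (if ∀ i, g i ∈ S then ((-1 : ℤ) ^ (k - S.card)) else 0) := by
        apply Finset.sum_congr rfl
        intro S _
        rw [card_pow_eq_sum k S, Finset.mul_sum]
        apply Finset.sum_congr rfl
        intro g _
        split <;> ring
    _ = ∑ g : Fin k → Fin k, ∑ S : Finset (Fin k),
          (if Finset.univ.image g ⊆ S then ((-1 : ℤ) ^ (k - S.card)) else 0) := by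
        rw [Finset.sum_comm]
        apply Finset.sum_congr rfl
        intro g _
        apply Finset.sum_congr rfl
        intro S _
        congr 1
        simp [Finset.image_subset_iff]
    _ = ∑ g : Fin k → Fin k, if Finset.univ.image g = Finset.univ then (1 : ℤ) else 0 := by
        apply Finset.sum_congr rfl
        intro g _
        exact innerAltSum k _
    _ = (Nat.factorial k : ℤ) := card_surj k
end AuxComb

section AuxPoly
open MvPolynomial
variable {R : Type*} [CommRing R] [Nontrivial R] {n : ℕ}


/-- "E is zero or has total degree < D" -/
def DegLT (E : MvPolynomial (Fin n) R) (D : ℕ) : Prop :=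
  E.totalDegree < D ∨ E = 0

lemma DegLT.add {E₁ E₂ : MvPolynomial (Fin n) R} {D : ℕ} (h₁ : DegLT E₁ D) (h₂ : DegLT E₂ D) :
    DegLT (E₁ + E₂) D := by
  rcases h₁ with h₁ | h₁
  · rcases h₂ with h₂ | h₂
    · exact Or.inl (lt_of_le_of_lt (totalDegree_add E₁ E₂) (max_lt h₁ h₂))
    · rw [h₂, add_zero]; exact Or.inl h₁
  · rw [h₁, zero_add]; exact h₂

lemma DegLT.mul_le {E q : MvPolynomial (Fin n) R} {D₁ D₂ : ℕ} (h : DegLT E D₁)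
    (hq : q.totalDegree ≤ D₂) : DegLT (E * q) (D₁ + D₂) := by
  rcases h with h | h
  · left
    exact lt_of_le_of_lt (totalDegree_mul E q)
      (lt_of_le_of_lt (Nat.add_le_add_left hq _) (by omega))
  · rw [h, zero_mul]; right; rfl

lemma DegLT.le_mul {E q : MvPolynomial (Fin n) R} {D₁ D₂ : ℕ} (h : DegLT E D₂)
    (hq : q.totalDegree ≤ D₁) : DegLT (q * E) (D₁ + D₂) := by
  rw [mul_comm, add_comm]
  exact h.mul_le hq

lemma DegLT.coeff_eq_zero {E : MvPolynomial (Fin n) R} {D : ℕ} (h : DegLT E D)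
    {u : Fin n →₀ ℕ} (hu : D ≤ u.sum fun _ e => e) : coeff u E = 0 := by
  rcases h with h | h
  · apply coeff_eq_zero_of_totalDegree_lt
    exact lt_of_lt_of_le h hu
  · rw [h]; simp

lemma single_pow (a : R) (b : Fin n → R) (j : Fin n) (d : ℕ) :
    ∃ E : MvPolynomial (Fin n) R,
      (C a * X j + C (b j)) ^ d = C (a ^ d) * X j ^ d + E ∧ DegLT E d := by
  refine ⟨∑ i ∈ Finset.range d, (C a * X j) ^ i * C (b j) ^ (d - i) * (d.choose i : MvPolynomial (Fin n) R), ?_, ?_⟩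
  · rw [add_pow]
    rw [Finset.sum_range_succ]
    simp only [Nat.sub_self, pow_zero, mul_one, Nat.choose_self, Nat.cast_one]
    rw [mul_pow, ← C_pow]
    ring
  · rcases Nat.eq_zero_or_pos d with hd | hd
    · right; rw [hd]; simp
    · left
      apply lt_of_le_of_lt (totalDegree_finsetSum_le ?_) (show d - 1 < d by omega)
      intro i hi
      rw [Finset.mem_range] at hi
      calc ((C a * X j) ^ i * C (b j) ^ (d - i) * (d.choose i : MvPolynomial (Fin n) R)).totalDegree
          ≤ ((C a * X j) ^ i * C (b j) ^ (d - i)).totalDegree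
            + ((d.choose i : MvPolynomial (Fin n) R)).totalDegree := totalDegree_mul _ _
        _ ≤ (((C a * X j) ^ i).totalDegree + (C (b j) ^ (d - i)).totalDegree) + 0 := by
            apply add_le_add (totalDegree_mul _ _)
            rw [← map_natCast (C : R →+* MvPolynomial (Fin n) R)]
            exact le_of_eq (totalDegree_C _)
        _ ≤ (i * ((C a * X j)).totalDegree + (d - i) * (C (b j)).totalDegree) + 0 := by
            apply add_le_add (add_le_add (totalDegree_pow _ _) (totalDegree_pow _ _)) le_rfl
        _ ≤ i * 1 + (d - i) * 0 + 0 := by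
            apply add_le_add _ le_rfl
            apply add_le_add
            · apply Nat.mul_le_mul_left
              apply le_trans (totalDegree_mul _ _)
              simp [totalDegree_C, totalDegree_X]
            · apply Nat.mul_le_mul_left
              simp [totalDegree_C]
        _ ≤ d - 1 := by omega

lemma prod_pow_affine (a : R) (b : Fin n → R) (T : Finset (Fin n)) (d : Fin n → ℕ) :
    ∃ E : MvPolynomial (Fin n) R,
      (∏ i ∈ T, (C a * X i + C (b i)) ^ d i)
        = C (a ^ (∑ i ∈ T, d i)) * (∏ i ∈ T, (X i : MvPolynomial (Fin n) R) ^ d i) + E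
      ∧ DegLT E (∑ i ∈ T, d i) := by
  classical
  induction T using Finset.induction_on with
  | empty => exact ⟨0, by simp, Or.inr rfl⟩
  | @insert j T' hj ih =>
    obtain ⟨E, hE, hdE⟩ := ih
    obtain ⟨E₁, hE₁, hdE₁⟩ := single_pow a b j (d j)
    refine ⟨E₁ * (C (a ^ (∑ i ∈ T', d i)) * ∏ i ∈ T', (X i : MvPolynomial (Fin n) R) ^ d i)
        + E₁ * E + (C (a ^ d j) * X j ^ d j) * E, ?_, ?_⟩
    · rw [Finset.prod_insert hj, Finset.prod_insert hj, hE, hE₁, Finset.sum_insert hj, pow_add,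
        map_mul]
      ring
    · rw [Finset.sum_insert hj]
      have hTop : (C (a ^ (∑ i ∈ T', d i)) * ∏ i ∈ T', (X i : MvPolynomial (Fin n) R) ^ d i).totalDegree
          ≤ ∑ i ∈ T', d i := by
        apply le_trans (totalDegree_mul _ _)
        rw [totalDegree_C, zero_add]
        apply le_trans (totalDegree_finset_prod _ _)
        apply Finset.sum_le_sum
        intro i _
        apply le_trans (totalDegree_pow _ _)
        simp [totalDegree_X]
      have hTop1 : (C (a ^ d j) * (X j : MvPolynomial (Fin n) R) ^ d j).totalDegree ≤ d j := by
        apply le_trans (totalDegree_mul _ _)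
        rw [totalDegree_C, zero_add]
        apply le_trans (totalDegree_pow _ _)
        simp [totalDegree_X]
      have h1 : DegLT (E₁ * (C (a ^ (∑ i ∈ T', d i)) * ∏ i ∈ T', (X i : MvPolynomial (Fin n) R) ^ d i))
          (d j + ∑ i ∈ T', d i) := hdE₁.mul_le hTop
      have h2 : DegLT (E₁ * E) (d j + ∑ i ∈ T', d i) := by
        rcases hdE with h | h
        · exact hdE₁.mul_le (le_of_lt h)
        · rw [h, mul_zero]; exact Or.inr rfl
      have h3 : DegLT ((C (a ^ d j) * (X j : MvPolynomial (Fin n) R) ^ d j) * E) (d j + ∑ i ∈ T', d i) :=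
        hdE.le_mul hTop1
      exact (h1.add h2).add h3

lemma coeff_bind₁_affine_monomial (a : R) (b : Fin n → R) (m : Fin n →₀ ℕ) (c : R)
    (u : Fin n →₀ ℕ) (h : (m.sum fun _ e => e) ≤ u.sum fun _ e => e) :
    coeff u (bind₁ (fun i => C a * X i + C (b i)) (monomial m c))
      = if u = m then a ^ (u.sum fun _ e => e) * c else 0 := by
  classical
  rw [bind₁_monomial]
  obtain ⟨E, hE, hdE⟩ := prod_pow_affine a b m.support (fun i => m i)
  have hsum : ∑ i ∈ m.support, m i = m.sum fun _ e => e := rfl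
  rw [hE, mul_add]
  rw [coeff_add]
  have hmon : (∏ i ∈ m.support, (X i : MvPolynomial (Fin n) R) ^ m i) = monomial m 1 := by
    rw [monomial_eq, C_1, one_mul]
    rfl
  have h2 : coeff u (C c * E) = 0 := by
    rw [coeff_C_mul]
    rw [hdE.coeff_eq_zero (hsum ▸ h)]
    ring
  rw [h2, add_zero, hmon]
  rw [show C c * (C (a ^ ∑ i ∈ m.support, m i) * monomial m 1)
      = C (c * a ^ ∑ i ∈ m.support, m i) * monomial m 1 by rw [map_mul]; ring]
  rw [coeff_C_mul, coeff_monomial]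
  rcases eq_or_ne u m with rfl | hne
  · simp [hsum]
    ring
  · rw [if_neg (fun hh => hne hh.symm), if_neg hne]
    ring

lemma coeff_bind₁_affine (a : R) (b : Fin n → R) (P : MvPolynomial (Fin n) R) (k : ℕ)
    (u : Fin n →₀ ℕ) (hP : P.totalDegree ≤ k) (hu : k ≤ u.sum fun _ e => e) :
    coeff u (bind₁ (fun i => C a * X i + C (b i)) P) = a ^ k * coeff u P := by
  classical
  conv_lhs => rw [P.as_sum, map_sum, coeff_sum]
  have hterm : ∀ m ∈ P.support,
      coeff u (bind₁ (fun i => C a * X i + C (b i)) (monomial m (coeff m P)))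
        = if u = m then a ^ (u.sum fun _ e => e) * coeff m P else 0 := by
    intro m hm
    apply coeff_bind₁_affine_monomial
    exact le_trans (le_trans (le_totalDegree hm) hP) hu
  rw [Finset.sum_congr rfl hterm]
  rw [Finset.sum_ite_eq P.support u (fun m => a ^ (u.sum fun _ e => e) * coeff m P)]
  rcases eq_or_lt_of_le hu with heq | hlt
  · rw [← heq]
    split
    · rfl
    · rename_i hmem
      rw [notMem_support_iff.mp hmem]
      ring
  · have hc : coeff u P = 0 := coeff_eq_zero_of_totalDegree_lt (lt_of_le_of_lt hP hlt)
    rw [hc]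
    split <;> ring

lemma eval_bind₁' (x : Fin n → R) (g : Fin n → MvPolynomial (Fin n) R)
    (φ : MvPolynomial (Fin n) R) :
    eval x (bind₁ g φ) = eval (fun i => eval x (g i)) φ :=
  aeval_bind₁ x g φ
end AuxPoly

section AuxRPoly
open MvPolynomial
lemma factorial_ne_zero_zmod (p k : ℕ) [Fact p.Prime] (hkp : k < p) :
    ((Nat.factorial k : ZMod p)) ≠ 0 := by
  rw [Ne, ZMod.natCast_eq_zero_iff]
  intro hdvd
  have := (Nat.Prime.dvd_factorial (Fact.out)).mp hdvd
  omega

lemma alt_sum_zmod (p k : ℕ) :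
    ∑ S : Finset (Fin k), (-1 : ZMod p) ^ (k - S.card) * ((S.card : ZMod p)) ^ k
      = (Nat.factorial k : ZMod p) := by
  have h := alt_sum_eq_factorial k
  have h2 := congrArg (fun z : ℤ => (z : ZMod p)) h
  push_cast at h2
  exact h2

lemma Rfun_poly (p : ℕ) [Fact p.Prime] (k : ℕ) (hkp : k < p)
    (V : Type*) [AddCommGroup V] [Module (ZMod p) V]
    (Q : V → ZMod p) (hQ : IsPolyDegLE p k Q) (y : Fin k → V) :
    IsPolyDegLE p (k - 1) (fun x => Q x - LQ k Q (fun i => y i + x)) := by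
  classical
  obtain ⟨n, e, P, hdeg, hval⟩ := hQ
  set RS : MvPolynomial (Fin n) (ZMod p) :=
    P - C ((Nat.factorial k : ZMod p))⁻¹ * ∑ S : Finset (Fin k),
      C ((-1 : ZMod p) ^ (k - S.card)) *
        bind₁ (fun i => C ((S.card : ZMod p)) * X i + C ((e (∑ j ∈ S, y j)) i)) P
    with hRS
  have hcoeff : ∀ u : Fin n →₀ ℕ, k ≤ (u.sum fun _ e => e) → coeff u RS = 0 := by
    intro u hu
    rw [hRS, coeff_sub, coeff_C_mul, coeff_sum]
    have : ∀ S : Finset (Fin k),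
        coeff u (C ((-1 : ZMod p) ^ (k - S.card)) *
          bind₁ (fun i => C ((S.card : ZMod p)) * X i + C ((e (∑ j ∈ S, y j)) i)) P)
        = (-1 : ZMod p) ^ (k - S.card) * (((S.card : ZMod p)) ^ k * coeff u P) := by
      intro S
      rw [coeff_C_mul, coeff_bind₁_affine _ _ P k u hdeg hu]
    rw [Finset.sum_congr rfl (fun S _ => this S)]
    have hsum : ∑ S : Finset (Fin k), (-1 : ZMod p) ^ (k - S.card) * (((S.card : ZMod p)) ^ k * coeff u P)
        = (Nat.factorial k : ZMod p) * coeff u P := by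
      rw [show (∑ S : Finset (Fin k), (-1 : ZMod p) ^ (k - S.card) * (((S.card : ZMod p)) ^ k * coeff u P))
          = (∑ S : Finset (Fin k), (-1 : ZMod p) ^ (k - S.card) * ((S.card : ZMod p)) ^ k) * coeff u P by
        rw [Finset.sum_mul]; apply Finset.sum_congr rfl; intro S _; ring]
      rw [alt_sum_zmod p k]
    rw [hsum, ← mul_assoc, inv_mul_cancel₀ (factorial_ne_zero_zmod p k hkp), one_mul, sub_self]
  refine ⟨n, e, RS, ?_, ?_⟩
  · -- total degree
    apply Finset.sup_le
    intro u hu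
    by_contra hcon
    push_neg at hcon
    have hk : k ≤ u.sum fun _ e => e := by omega
    exact (mem_support_iff.mp hu) (hcoeff u hk)
  · -- evaluation
    intro x
    have heval_bind : ∀ S : Finset (Fin k),
        eval (e x) (bind₁ (fun i => C ((S.card : ZMod p)) * X i + C ((e (∑ j ∈ S, y j)) i)) P)
          = Q (S.card • x + ∑ j ∈ S, y j) := by
      intro S
      rw [eval_bind₁']
      rw [hval (S.card • x + ∑ j ∈ S, y j)]
      have hpt : (fun i => eval (e x) (C ((S.card : ZMod p)) * X i + C ((e (∑ j ∈ S, y j)) i)))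
          = e (S.card • x + ∑ j ∈ S, y j) := by
        funext i
        simp only [eval_add, eval_mul, eval_C, eval_X, map_add, map_nsmul, Pi.add_apply,
          Pi.smul_apply, nsmul_eq_mul, Pi.mul_apply, Pi.natCast_apply]
      rw [hpt]
    show Q x - LQ k Q (fun i => y i + x) = eval (e x) RS
    rw [hRS]
    rw [map_sub, map_mul, eval_C, map_sum]
    rw [Finset.sum_congr rfl (fun S _ => by rw [map_mul, eval_C, heval_bind S])]
    rw [← hval x]
    unfold LQ discDeriv
    congr 1
    congr 1
    apply Finset.sum_congr rfl
    intro S _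
    congr 2
    rw [zero_add, Finset.sum_add_distrib, Finset.sum_const]
    exact add_comm _ _

end AuxRPoly

section AuxSample

lemma exists_sample {V Y : Type*} [Fintype V] [Fintype Y] [Nonempty Y] (F : V → ℂ) (u : Y → V → ℂ)
    (hF : ∀ x, (Fintype.card Y : ℂ) * F x = ∑ y : Y, u y x) (A : ℝ)
    (hA : ∀ y : Y, (∑ x : V, Complex.normSq (F x - u y x)) ≤ A) :
    ∀ m : ℕ, ∃ w : Fin m → Y,
      (∑ x : V, Complex.normSq ((m : ℂ) * F x - ∑ i, u (w i) x)) ≤ m * A := by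
  have hA0 : 0 ≤ A := le_trans (Finset.sum_nonneg fun x _ => Complex.normSq_nonneg _)
    (hA Classical.ofNonempty)
  intro m
  induction m with
  | zero => exact ⟨Fin.elim0, by simp⟩
  | succ m ih =>
    obtain ⟨w, hw⟩ := ih
    set D : V → ℂ := fun x => (m : ℂ) * F x - ∑ i, u (w i) x with hD
    have hGzero : ∀ x, ∑ y : Y, (F x - u y x) = 0 := by
      intro x
      rw [Finset.sum_sub_distrib, Finset.sum_const, ← hF x]
      simp [nsmul_eq_mul]
    have cross' : ∑ y : Y, ∑ x : V, (D x * (starRingEnd ℂ) (F x - u y x)) = 0 := by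
      rw [Finset.sum_comm]
      have hx : ∀ x : V, ∑ y : Y, D x * (starRingEnd ℂ) (F x - u y x)
          = D x * (starRingEnd ℂ) (∑ y : Y, (F x - u y x)) := by
        intro x; rw [map_sum, Finset.mul_sum]
      rw [Finset.sum_congr rfl (fun x _ => hx x)]
      simp [hGzero]
    have cross : ∑ y : Y, ∑ x : V, (D x * (starRingEnd ℂ) (F x - u y x)).re = 0 := by
      have h := congrArg Complex.re cross'
      simpa [Complex.re_sum] using h
    have step : ∑ y : Y, (∑ x : V, Complex.normSq (((m : ℂ) + 1) * F x - (∑ i, u (w i) x + u y x)))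
        ≤ (Fintype.card Y : ℝ) * ((m + 1) * A) := by
      have harg : ∀ (y : Y) (x : V), ((m : ℂ) + 1) * F x - (∑ i, u (w i) x + u y x)
          = D x + (F x - u y x) := by
        intro y x; rw [hD]; ring
      calc ∑ y : Y, ∑ x : V, Complex.normSq (((m : ℂ) + 1) * F x - (∑ i, u (w i) x + u y x))
          = ∑ y : Y, ∑ x : V, (Complex.normSq (D x) + Complex.normSq (F x - u y x)
              + 2 * (D x * (starRingEnd ℂ) (F x - u y x)).re) := by
            apply Finset.sum_congr rfl; intro y _
            apply Finset.sum_congr rfl; intro x _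
            rw [harg y x, Complex.normSq_add]
        _ = (Fintype.card Y : ℝ) * (∑ x : V, Complex.normSq (D x))
              + (∑ y : Y, ∑ x : V, Complex.normSq (F x - u y x))
              + 2 * (∑ y : Y, ∑ x : V, (D x * (starRingEnd ℂ) (F x - u y x)).re) := by
            rw [Finset.sum_congr rfl (fun y (_ : y ∈ Finset.univ) => by
              rw [Finset.sum_add_distrib, Finset.sum_add_distrib, ← Finset.mul_sum])]
            rw [Finset.sum_add_distrib, Finset.sum_add_distrib, Finset.sum_const, nsmul_eq_mul,
              Finset.card_univ, ← Finset.mul_sum]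
        _ ≤ (Fintype.card Y : ℝ) * (m * A) + (Fintype.card Y : ℝ) * A + 2 * 0 := by
            apply add_le_add (add_le_add ?_ ?_) ?_
            · exact mul_le_mul_of_nonneg_left hw (Nat.cast_nonneg _)
            · calc (∑ y : Y, ∑ x : V, Complex.normSq (F x - u y x))
                  ≤ ∑ _y : Y, A := Finset.sum_le_sum (fun y _ => hA y)
                _ = (Fintype.card Y : ℝ) * A := by
                    rw [Finset.sum_const, nsmul_eq_mul, Finset.card_univ]
            · rw [cross]
        _ = (Fintype.card Y : ℝ) * ((m + 1) * A) := by ring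
    have hex : ∃ y : Y, (∑ x : V, Complex.normSq (((m : ℂ) + 1) * F x - (∑ i, u (w i) x + u y x)))
        ≤ (m + 1) * A := by
      by_contra hcon
      push_neg at hcon
      have : (Fintype.card Y : ℝ) * ((m + 1) * A)
          < ∑ y : Y, (∑ x : V, Complex.normSq (((m : ℂ) + 1) * F x - (∑ i, u (w i) x + u y x))) := by
        calc (Fintype.card Y : ℝ) * ((m + 1) * A) = ∑ _y : Y, (m + 1) * A := by
              rw [Finset.sum_const, nsmul_eq_mul, Finset.card_univ]
          _ < _ := Finset.sum_lt_sum_of_nonempty Finset.univ_nonempty (fun y _ => hcon y)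
      linarith [step]
    obtain ⟨y₀, hy₀⟩ := hex
    set w' : Fin (m + 1) → Y := Fin.snoc w y₀ with hw'
    refine ⟨w', ?_⟩
    have hsnoc : ∀ x : V, ∑ i : Fin (m + 1), u (w' i) x
        = ∑ i : Fin m, u (w i) x + u y₀ x := by
      intro x
      rw [Fin.sum_univ_castSucc]
      simp [hw', Fin.snoc_castSucc, Fin.snoc_last]
    calc ∑ x : V, Complex.normSq (((m + 1 : ℕ) : ℂ) * F x - ∑ i : Fin (m + 1), u (w' i) x)
        = ∑ x : V, Complex.normSq (((m : ℂ) + 1) * F x - (∑ i : Fin m, u (w i) x + u y₀ x)) := by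
          apply Finset.sum_congr rfl; intro x _
          rw [hsnoc x]
          norm_num
      _ ≤ (m + 1) * A := hy₀
      _ = ((m + 1 : ℕ) : ℝ) * A := by norm_num
end AuxSample


/-- Approximation theorem for biased polynomials: there is `C = C(k)` such
that for any prime `p > k`, any finite-dimensional `F_p`-vector space `V`, any polynomial
`Q : V → F_p` of degree `k` with `bias L_Q ≥ c` and any `ε > 0`, the phase `χ ∘ Q` is
`ε`-close in `L²` to a combination of at most `(εc/2)^{-C}` phases of polynomials of degree
at most `k - 1`, with coefficients summing to at most `c⁻¹` in absolute value. -/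
theorem biased_poly_approx (k : ℕ) :
    ∃ C : ℕ, 1 ≤ C ∧
      ∀ (p : ℕ) [Fact p.Prime], k < p →
        ∀ (V : Type) [AddCommGroup V] [Module (ZMod p) V] [Fintype V],
          ∀ (Q : V → ZMod p) (c ε : ℝ), 0 < c → 0 < ε →
            IsPolyDegLE p k Q → c ≤ biasF (LQ k Q) →
            ∃ (m : ℕ) (coef : Fin m → ℂ) (R : Fin m → V → ZMod p),
              (m : ℝ) ≤ (ε * c / 2)⁻¹ ^ C ∧
              (∑ i, ‖coef i‖) ≤ c⁻¹ ∧
              (∀ i, IsPolyDegLE p (k - 1) (R i)) ∧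
              L2norm (fun x : V => chi p (Q x) - ∑ i, coef i * chi p (R i x)) ≤ ε := by
  refine ⟨5, by norm_num, ?_⟩
  intro p hp hkp V _ _ _ Q c ε hc hε hQ hbias
  haveI : Nonempty V := ⟨0⟩
  have hcardV : (0 : ℝ) < (Fintype.card V : ℝ) := by
    exact_mod_cast Fintype.card_pos
  by_cases hε1 : 1 ≤ ε
  · -- trivial approximation by the empty sum
    refine ⟨0, fun _ => 0, fun _ _ => 0, ?_, ?_, fun i => i.elim0, ?_⟩
    · simp only [Nat.cast_zero]
      positivity
    · simp only [Finset.univ_eq_empty, Finset.sum_empty]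
      positivity
    · unfold L2norm
      have hone : ∀ x : V, ‖chi p (Q x)
          - ∑ i : Fin 0, (fun _ : Fin 0 => (0:ℂ)) i * chi p ((fun _ _ => (0:ZMod p)) i x)‖ ^ 2 = 1 := by
        intro x
        rw [show (∑ i : Fin 0, (fun _ : Fin 0 => (0:ℂ)) i * chi p ((fun _ _ => (0:ZMod p)) i x)) = 0
          by simp]
        rw [sub_zero, abs_chi, one_pow]
      calc Real.sqrt ((∑ x : V, ‖(fun x : V => chi p (Q x)
            - ∑ i : Fin 0, (fun _ : Fin 0 => (0:ℂ)) i * chi p ((fun _ _ => (0:ZMod p)) i x)) x‖ ^ 2)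
            / (Fintype.card V : ℝ))
          = Real.sqrt ((∑ _x : V, (1:ℝ)) / (Fintype.card V : ℝ)) := by
            rw [Finset.sum_congr rfl (fun x _ => hone x)]
        _ = 1 := by
            rw [Finset.sum_const, nsmul_eq_mul, Finset.card_univ, mul_one,
              div_self (ne_of_gt hcardV), Real.sqrt_one]
        _ ≤ ε := hε1
  · push_neg at hε1
    -- notation
    set b : ℂ := expAvg (fun y : Fin k → V => chi p (LQ k Q y)) with hb
    have hbias' : c ≤ b.re := hbias
    have habs : c ≤ ‖b‖ := le_trans hbias' (Complex.re_le_norm b)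
    have hbne : b ≠ 0 := by
      intro h
      rw [h] at habs
      simp at habs
      linarith
    have hconjb : (starRingEnd ℂ) b ≠ 0 := by
      intro h
      apply hbne
      have := congrArg (starRingEnd ℂ) h
      simpa using this
    have hcardY : (0 : ℝ) < (Fintype.card (Fin k → V) : ℝ) := by
      exact_mod_cast Fintype.card_pos
    have hcardYC : ((Fintype.card (Fin k → V) : ℂ)) ≠ 0 := by
      exact_mod_cast ne_of_gt hcardY
    have habs1 : ‖b‖ ≤ 1 := by
      rw [hb]
      unfold expAvg
      rw [norm_div, Complex.norm_natCast]
      rw [div_le_one hcardY]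
      calc ‖∑ y : Fin k → V, chi p (LQ k Q y)‖
          ≤ ∑ y : Fin k → V, ‖chi p (LQ k Q y)‖ :=
            norm_sum_le _ _
        _ = (Fintype.card (Fin k → V) : ℝ) := by
            rw [Finset.sum_congr rfl fun y _ => abs_chi (LQ k Q y)]
            rw [Finset.sum_const, nsmul_eq_mul, Finset.card_univ, mul_one]
    have hc1 : c ≤ 1 := le_trans habs habs1
    set β : ℂ := ((starRingEnd ℂ) b)⁻¹ with hβ
    have habsβ : ‖β‖ ≤ c⁻¹ := by
      rw [hβ, norm_inv, Complex.norm_conj]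
      exact inv_anti₀ hc habs
    set Rfun : (Fin k → V) → V → ZMod p := fun y x => Q x - LQ k Q (fun i => y i + x) with hRfun
    have hRpoly : ∀ y, IsPolyDegLE p (k - 1) (Rfun y) := fun y => Rfun_poly p k hkp V Q hQ y
    set u : (Fin k → V) → V → ℂ := fun y x => β * chi p (Rfun y x) with hu
    set T : ℂ := ∑ y : Fin k → V, chi p (LQ k Q y) with hT
    have hTb : T = (Fintype.card (Fin k → V) : ℂ) * b := by
      rw [hb]
      unfold expAvg
      rw [hT]
      field_simp
    have hshift : ∀ x : V, ∑ y : Fin k → V, chi p (LQ k Q (fun i => y i + x)) = T := by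
      intro x
      rw [hT]
      exact Fintype.sum_equiv (Equiv.piCongrRight (fun _ => Equiv.addRight x)) _ _ (fun y => rfl)
    have hkey : ∀ (y : Fin k → V) (x : V), chi p (LQ k Q (fun i => y i + x))
        = chi p (Q x) * (starRingEnd ℂ) (chi p (Rfun y x)) := by
      intro y x
      rw [conj_chi, ← chi_add]
      congr 1
      rw [hRfun]
      ring
    have hTW : ∀ x : V, T = chi p (Q x) * (starRingEnd ℂ) (∑ y : Fin k → V, chi p (Rfun y x)) := by
      intro x
      rw [map_sum, Finset.mul_sum, ← hshift x]
      exact Finset.sum_congr rfl fun y _ => hkey y x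
    have hunit : ∀ x : V, chi p (Q x) * (starRingEnd ℂ) (chi p (Q x)) = 1 := by
      intro x
      rw [Complex.mul_conj]
      norm_cast
      rw [Complex.normSq_eq_norm_sq, abs_chi]
      norm_num
    have hW : ∀ x : V, (∑ y : Fin k → V, chi p (Rfun y x)) = chi p (Q x) * (starRingEnd ℂ) T := by
      intro x
      have h1 := congrArg (starRingEnd ℂ) (hTW x)
      rw [map_mul] at h1
      simp only [Complex.conj_conj] at h1
      calc (∑ y : Fin k → V, chi p (Rfun y x))
          = chi p (Q x) * (starRingEnd ℂ) (chi p (Q x)) * (∑ y : Fin k → V, chi p (Rfun y x)) := by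
            rw [hunit x, one_mul]
        _ = chi p (Q x) * ((starRingEnd ℂ) (chi p (Q x)) * (∑ y : Fin k → V, chi p (Rfun y x))) := by
            ring
        _ = chi p (Q x) * (starRingEnd ℂ) T := by rw [← h1]
    have hfund : ∀ x : V, ((Fintype.card (Fin k → V) : ℂ)) * chi p (Q x) = ∑ y : Fin k → V, u y x := by
      intro x
      rw [hu]
      simp only []
      rw [← Finset.mul_sum, hW x, hTb, map_mul, map_natCast]
      rw [hβ]
      field_simp
    -- the quantity A bounding each squared distance
    set A : ℝ := (Fintype.card V : ℝ) * (2 / c) ^ 2 with hA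
    have hinvc : 1 ≤ c⁻¹ := (one_le_inv₀ hc).mpr hc1
    have hboundA : ∀ y : Fin k → V, (∑ x : V, Complex.normSq (chi p (Q x) - u y x)) ≤ A := by
      intro y
      rw [hA]
      calc (∑ x : V, Complex.normSq (chi p (Q x) - u y x))
          ≤ ∑ _x : V, (2 / c) ^ 2 := by
            apply Finset.sum_le_sum
            intro x _
            rw [← Complex.sq_norm]
            apply pow_le_pow_left₀ (norm_nonneg _)
            calc ‖chi p (Q x) - u y x‖
                ≤ ‖chi p (Q x)‖ + ‖u y x‖ := by
                  exact (norm_sub_le _ _)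
              _ = 1 + ‖β‖ := by
                  rw [abs_chi, hu]
                  simp only []
                  rw [norm_mul, abs_chi, mul_one]
              _ ≤ c⁻¹ + c⁻¹ := add_le_add hinvc habsβ
              _ = 2 / c := by rw [div_eq_mul_inv]; ring
        _ = (Fintype.card V : ℝ) * (2 / c) ^ 2 := by
            rw [Finset.sum_const, nsmul_eq_mul, Finset.card_univ]
    set m : ℕ := ⌈4 / (ε ^ 2 * c ^ 2)⌉₊ with hm
    have hm_pos : 0 < m := by
      rw [hm]
      apply Nat.ceil_pos.mpr
      positivity
    have hm0C : ((m : ℂ)) ≠ 0 := by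
      exact_mod_cast Nat.pos_iff_ne_zero.mp hm_pos
    have hm0R : ((m : ℝ)) ≠ 0 := by
      exact_mod_cast Nat.pos_iff_ne_zero.mp hm_pos
    have hm_ge : 4 / (ε ^ 2 * c ^ 2) ≤ (m : ℝ) := Nat.le_ceil _
    have hm_le : (m : ℝ) ≤ (ε * c / 2)⁻¹ ^ 5 := by
      have h1 : (m : ℝ) < 4 / (ε ^ 2 * c ^ 2) + 1 := Nat.ceil_lt_add_one (by positivity)
      have hεc : 0 < ε * c := mul_pos hε hc
      have hεc1 : ε * c ≤ 1 := by nlinarith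
      have hpow : (ε * c) ^ 5 ≤ (ε * c) ^ 2 := pow_le_pow_of_le_one hεc.le hεc1 (by norm_num)
      have h5 : (0 : ℝ) < (ε * c) ^ 5 := by positivity
      have h2 : (0 : ℝ) < (ε * c) ^ 2 := by positivity
      have heq : (ε * c / 2)⁻¹ ^ 5 = 32 / (ε * c) ^ 5 := by
        rw [inv_div, div_pow]
        norm_num
      rw [heq]
      have hA1 : 4 / (ε ^ 2 * c ^ 2) = 4 / (ε * c) ^ 2 := by ring_nf
      have hb1 : 4 / (ε * c) ^ 2 ≤ 4 / (ε * c) ^ 5 := by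
        apply div_le_div_of_nonneg_left (by norm_num) h5 hpow
      have hb2 : (ε * c) ^ 5 ≤ 1 := by
        calc (ε * c) ^ 5 ≤ (ε * c) ^ 2 := hpow
          _ ≤ 1 := by nlinarith
      have hb3 : 1 ≤ 1 / (ε * c) ^ 5 := by
        rw [le_div_iff₀ h5]
        linarith
      have : 4 / (ε ^ 2 * c ^ 2) + 1 ≤ 32 / (ε * c) ^ 5 := by
        rw [hA1]
        have : 4 / (ε * c) ^ 5 + 1 / (ε * c) ^ 5 ≤ 32 / (ε * c) ^ 5 := by
          rw [← add_div, div_le_div_iff₀ h5 h5]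
          nlinarith
        linarith
      linarith
    obtain ⟨w, hw⟩ := exists_sample (fun x : V => chi p (Q x)) u hfund A hboundA m
    refine ⟨m, fun _ => β / (m : ℂ), fun i => Rfun (w i), hm_le, ?_, fun i => hRpoly (w i), ?_⟩
    · -- coefficient bound
      calc (∑ _i : Fin m, ‖β / (m : ℂ)‖)
          = (m : ℝ) * (‖β‖ / (m : ℝ)) := by
            rw [Finset.sum_const, nsmul_eq_mul, Finset.card_univ, Fintype.card_fin]
            rw [norm_div, Complex.norm_natCast]
        _ = ‖β‖ := by field_simp
        _ ≤ c⁻¹ := habsβ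
    · -- L2 bound
      have hpt : ∀ x : V, chi p (Q x) - ∑ i : Fin m, (β / (m : ℂ)) * chi p (Rfun (w i) x)
          = ((m : ℂ))⁻¹ * ((m : ℂ) * chi p (Q x) - ∑ i : Fin m, u (w i) x) := by
        intro x
        have hsum : ∑ i : Fin m, (β / (m : ℂ)) * chi p (Rfun (w i) x)
            = ((m : ℂ))⁻¹ * ∑ i : Fin m, u (w i) x := by
          rw [Finset.mul_sum]
          apply Finset.sum_congr rfl
          intro i _
          rw [hu]
          simp only []
          ring
        rw [hsum, mul_sub, ← mul_assoc, inv_mul_cancel₀ hm0C, one_mul]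
      have hsq : (∑ x : V, ‖(fun x : V => chi p (Q x)
          - ∑ i : Fin m, (β / (m : ℂ)) * chi p (Rfun (w i) x)) x‖ ^ 2)
          ≤ ((m : ℝ) ^ 2)⁻¹ * ((m : ℝ) * A) := by
        calc (∑ x : V, ‖(fun x : V => chi p (Q x)
            - ∑ i : Fin m, (β / (m : ℂ)) * chi p (Rfun (w i) x)) x‖ ^ 2)
            = ∑ x : V, ((m : ℝ) ^ 2)⁻¹ * Complex.normSq ((m : ℂ) * chi p (Q x) - ∑ i : Fin m, u (w i) x) := by
              apply Finset.sum_congr rfl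
              intro x _
              beta_reduce
              rw [Complex.sq_norm, hpt x, Complex.normSq_mul, Complex.normSq_inv]
              congr 1
              rw [Complex.normSq_natCast, pow_two, mul_inv]
          _ = ((m : ℝ) ^ 2)⁻¹ * ∑ x : V, Complex.normSq ((m : ℂ) * chi p (Q x) - ∑ i : Fin m, u (w i) x) := by
              rw [Finset.mul_sum]
          _ ≤ ((m : ℝ) ^ 2)⁻¹ * ((m : ℝ) * A) := by
              apply mul_le_mul_of_nonneg_left hw (by positivity)
      unfold L2norm
      have hdivle : (∑ x : V, ‖(fun x : V => chi p (Q x)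
          - ∑ i : Fin m, (β / (m : ℂ)) * chi p (Rfun (w i) x)) x‖ ^ 2) / (Fintype.card V : ℝ)
          ≤ ε ^ 2 := by
        have hAm : ((m : ℝ) ^ 2)⁻¹ * ((m : ℝ) * A) / (Fintype.card V : ℝ) = (2 / c) ^ 2 / (m : ℝ) := by
          rw [hA]
          field_simp
        have h2 : (2 / c) ^ 2 / (m : ℝ) ≤ ε ^ 2 := by
          rw [div_le_iff₀ (by positivity : (0:ℝ) < (m:ℝ))]
          have h4 : (2 / c) ^ 2 = 4 / c ^ 2 := by
            rw [div_pow]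
            norm_num
          rw [h4]
          have := hm_ge
          rw [div_le_iff₀ (by positivity : (0:ℝ) < ε ^ 2 * c ^ 2)] at this
          calc 4 / c ^ 2 = 4 * (c ^ 2)⁻¹ := by rw [div_eq_mul_inv]
            _ ≤ (m : ℝ) * (ε ^ 2 * c ^ 2) * (c ^ 2)⁻¹ := by
                apply mul_le_mul_of_nonneg_right _ (by positivity)
                linarith
            _ = ε ^ 2 * (m : ℝ) := by field_simp
        calc (∑ x : V, ‖(fun x : V => chi p (Q x)
            - ∑ i : Fin m, (β / (m : ℂ)) * chi p (Rfun (w i) x)) x‖ ^ 2) / (Fintype.card V : ℝ)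
            ≤ ((m : ℝ) ^ 2)⁻¹ * ((m : ℝ) * A) / (Fintype.card V : ℝ) := by
              exact (div_le_div_iff_of_pos_right hcardV).mpr hsq
          _ = (2 / c) ^ 2 / (m : ℝ) := hAm
          _ ≤ ε ^ 2 := h2
      calc Real.sqrt ((∑ x : V, ‖(fun x : V => chi p (Q x)
          - ∑ i : Fin m, (β / (m : ℂ)) * chi p (Rfun (w i) x)) x‖ ^ 2) / (Fintype.card V : ℝ))
          ≤ Real.sqrt (ε ^ 2) := Real.sqrt_le_sqrt hdivle
        _ = ε := Real.sqrt_sq hε.le
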